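/- Conversely (Cohen–Rothblum type factorization): any Γ ∈ U(p¹, p²) with nonnegative rank at most r can be written as Γ = (Γ¹)ᵀ Diag(σ)⁻¹ Γ² for some σ ∈ Δ_r with strictly positive entries, Γ¹ ∈ U(σ, p¹), and Γ² ∈ U(σ, p²). -/

import Mathlib

open Matrix Finset

/-- Cohen–Rothblum type factorization: any `Γ ∈ U(p1,p2)` with
nonnegative rank at most `r` factors as `Γ = (Γ1)ᵀ Diag(σ)⁻¹ Γ2` with
`σ ∈ Δ_r` strictly positive, `Γ1 ∈ U(σ,p1)`, `Γ2 ∈ U(σ,p2)`. -/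
theorem cohen_rothblum_factorization
    (n m r : ℕ)
    (p1 : Fin n → ℝ) (p2 : Fin m → ℝ)
    (hp1pos : ∀ i, 0 < p1 i) (hp2pos : ∀ j, 0 < p2 j)
    (hp1sum : ∑ i, p1 i = 1) (hp2sum : ∑ j, p2 j = 1)
    (Γ : Matrix (Fin n) (Fin m) ℝ)
    (hΓnonneg : ∀ i j, 0 ≤ Γ i j)
    (hΓrows : ∀ i, ∑ j, Γ i j = p1 i) (hΓcols : ∀ j, ∑ i, Γ i j = p2 j)
    (a : Fin r → Fin n → ℝ) (b : Fin r → Fin m → ℝ)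
    (ha : ∀ t i, 0 ≤ a t i) (hb : ∀ t j, 0 ≤ b t j)
    (hfac : ∀ i j, Γ i j = ∑ t, a t i * b t j) :
    ∃ (σ : Fin r → ℝ) (Γ1 : Matrix (Fin r) (Fin n) ℝ)
      (Γ2 : Matrix (Fin r) (Fin m) ℝ),
      (∀ t, 0 < σ t) ∧ (∑ t, σ t = 1) ∧
      (∀ t i, 0 ≤ Γ1 t i) ∧ (∀ t, ∑ i, Γ1 t i = σ t) ∧ (∀ i, ∑ t, Γ1 t i = p1 i) ∧
      (∀ t j, 0 ≤ Γ2 t j) ∧ (∀ t, ∑ j, Γ2 t j = σ t) ∧ (∀ j, ∑ t, Γ2 t j = p2 j) ∧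
      Γ = Γ1ᵀ * Matrix.diagonal (fun t => (σ t)⁻¹) * Γ2 := by
  classical
  set A : Fin r → ℝ := fun t => ∑ i, a t i with hA
  set B : Fin r → ℝ := fun t => ∑ j, b t j with hB
  set s : Fin r → ℝ := fun t => A t * B t with hs
  have hAnn : ∀ t, 0 ≤ A t := fun t => Finset.sum_nonneg fun i _ => ha t i
  have hBnn : ∀ t, 0 ≤ B t := fun t => Finset.sum_nonneg fun j _ => hb t j
  have hsnn : ∀ t, 0 ≤ s t := fun t => mul_nonneg (hAnn t) (hBnn t)
  have hazero : ∀ t, A t = 0 → ∀ i, a t i = 0 := by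
    intro t h i
    exact (Finset.sum_eq_zero_iff_of_nonneg (fun i _ => ha t i)).mp h i (Finset.mem_univ i)
  have hbzero : ∀ t, B t = 0 → ∀ j, b t j = 0 := by
    intro t h j
    exact (Finset.sum_eq_zero_iff_of_nonneg (fun j _ => hb t j)).mp h j (Finset.mem_univ j)
  have hw1 : ∀ i, ∑ t, a t i * B t = p1 i := by
    intro i
    calc ∑ t, a t i * B t = ∑ t, ∑ j, a t i * b t j := by
          simp only [hB, Finset.mul_sum]
      _ = ∑ j, ∑ t, a t i * b t j := Finset.sum_comm
      _ = ∑ j, Γ i j := by simp only [hfac]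
      _ = p1 i := hΓrows i
  have hw2 : ∀ j, ∑ t, A t * b t j = p2 j := by
    intro j
    calc ∑ t, A t * b t j = ∑ t, ∑ i, a t i * b t j := by
          simp only [hA, Finset.sum_mul]
      _ = ∑ i, ∑ t, a t i * b t j := Finset.sum_comm
      _ = ∑ i, Γ i j := by simp only [hfac]
      _ = p2 j := hΓcols j
  have hssum : ∑ t, s t = 1 := by
    calc ∑ t, s t = ∑ t, ∑ i, a t i * B t := by
          simp only [hs, hA, Finset.sum_mul]
      _ = ∑ i, ∑ t, a t i * B t := Finset.sum_comm
      _ = ∑ i, p1 i := by simp only [hw1]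
      _ = 1 := hp1sum
  have hex : ∃ t0, s t0 ≠ 0 := by
    by_contra h
    push_neg at h
    rw [Finset.sum_congr rfl (fun t _ => h t)] at hssum
    simp at hssum
  obtain ⟨t0, ht0⟩ := hex
  have hst0 : 0 < s t0 := lt_of_le_of_ne (hsnn t0) (Ne.symm ht0)
  have hA0 : A t0 ≠ 0 := fun h => ht0 (by simp [hs, h])
  have hB0 : B t0 ≠ 0 := fun h => ht0 (by simp [hs, h])
  set P : Fin r → Prop := fun t => s t = 0 ∨ t = t0 with hP
  set k : ℕ := (Finset.univ.filter (fun t => s t = 0)).card + 1 with hk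
  have hkpos : (0:ℝ) < (k:ℝ) := by exact_mod_cast Nat.succ_pos _
  have hkne : (k:ℝ) ≠ 0 := ne_of_gt hkpos
  have hCeq : Finset.univ.filter P = insert t0 (Finset.univ.filter (fun t => s t = 0)) := by
    ext t
    simp only [Finset.mem_filter, Finset.mem_univ, true_and, Finset.mem_insert, hP]
    tauto
  have ht0notin : t0 ∉ Finset.univ.filter (fun t => s t = 0) := by simp [ht0]
  have hCcard : (Finset.univ.filter P).card = k := by
    rw [hCeq, Finset.card_insert_of_notMem ht0notin]
  set σ : Fin r → ℝ := fun t => if P t then s t0 / k else s t with hσ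
  have hAt : ∀ t, ¬ P t → A t ≠ 0 := by
    intro t h hA0'
    exact h (Or.inl (by simp [hs, hA0']))
  have hBt : ∀ t, ¬ P t → B t ≠ 0 := by
    intro t h hB0'
    exact h (Or.inl (by simp [hs, hB0']))
  have hσpos : ∀ t, 0 < σ t := by
    intro t
    rw [hσ]
    dsimp only
    split_ifs with h
    · exact div_pos hst0 hkpos
    · exact lt_of_le_of_ne (hsnn t) (Ne.symm (fun h' => h (Or.inl h')))
  have hσne : ∀ t, σ t ≠ 0 := fun t => ne_of_gt (hσpos t)
  -- main redistribution lemma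
  have main : ∀ (d : ℝ) (c w : Fin r → ℝ),
      s t0 * d = w t0 →
      (∀ t, ¬ P t → s t * c t = w t) →
      (∀ t, s t = 0 → w t = 0) →
      ∑ t, σ t * (if P t then d else c t) = ∑ t, w t := by
    intro d c w h1 h2 h3
    have lhsP : ∑ t ∈ Finset.univ.filter P, σ t * (if P t then d else c t) = w t0 := by
      have heach : ∀ t ∈ Finset.univ.filter P, σ t * (if P t then d else c t) = s t0 / k * d := by
        intro t ht
        rw [Finset.mem_filter] at ht
        rw [hσ]
        simp only [ht.2, if_true]
      rw [Finset.sum_congr rfl heach, Finset.sum_const, hCcard, nsmul_eq_mul]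
      field_simp
      linarith [h1]
    have rhsP : ∑ t ∈ Finset.univ.filter P, w t = w t0 := by
      rw [hCeq, Finset.sum_insert ht0notin]
      have : ∑ t ∈ Finset.univ.filter (fun t => s t = 0), w t = 0 :=
        Finset.sum_eq_zero fun t ht => h3 t (by simpa using (Finset.mem_filter.mp ht).2)
      rw [this, add_zero]
    have hnotP : ∑ t ∈ Finset.univ.filter (fun t => ¬ P t), σ t * (if P t then d else c t)
        = ∑ t ∈ Finset.univ.filter (fun t => ¬ P t), w t := by
      refine Finset.sum_congr rfl fun t ht => ?_
      rw [Finset.mem_filter] at ht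
      rw [hσ]
      simp only [if_neg ht.2]
      exact h2 t ht.2
    calc ∑ t, σ t * (if P t then d else c t)
        = (∑ t ∈ Finset.univ.filter P, σ t * (if P t then d else c t))
          + ∑ t ∈ Finset.univ.filter (fun t => ¬ P t), σ t * (if P t then d else c t) :=
          (Finset.sum_filter_add_sum_filter_not Finset.univ P _).symm
      _ = (∑ t ∈ Finset.univ.filter P, w t) + ∑ t ∈ Finset.univ.filter (fun t => ¬ P t), w t := by
          rw [lhsP, rhsP, hnotP]
      _ = ∑ t, w t := Finset.sum_filter_add_sum_filter_not Finset.univ P _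
  set Γ1 : Matrix (Fin r) (Fin n) ℝ :=
    fun t i => σ t * (if P t then a t0 i / A t0 else a t i / A t) with hΓ1
  set Γ2 : Matrix (Fin r) (Fin m) ℝ :=
    fun t j => σ t * (if P t then b t0 j / B t0 else b t j / B t) with hΓ2
  refine ⟨σ, Γ1, Γ2, hσpos, ?_, ?_, ?_, ?_, ?_, ?_, ?_, ?_⟩
  · -- sum σ = 1
    have := main 1 (fun _ => 1) s (by simpa using rfl) ?_ ?_
    · simpa using this.trans hssum
    · intro t ht; simp
    · intro t ht; exact ht
  · -- Γ1 nonneg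
    intro t i
    rw [hΓ1]
    refine mul_nonneg (le_of_lt (hσpos t)) ?_
    split_ifs
    · exact div_nonneg (ha t0 i) (hAnn t0)
    · exact div_nonneg (ha t i) (hAnn t)
  · -- row sums of Γ1
    intro t
    rw [hΓ1]
    simp only
    rw [← Finset.mul_sum]
    by_cases hPt : P t
    · simp only [if_pos hPt, ← Finset.sum_div, ← hA, div_self hA0, mul_one]; show σ t * (A t0 / A t0) = σ t; rw [div_self hA0, mul_one]
    · simp only [if_neg hPt, ← Finset.sum_div, ← hA, div_self (hAt t hPt), mul_one]; show σ t * (A t / A t) = σ t; rw [div_self (hAt t hPt), mul_one]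
  · -- column sums of Γ1
    intro i
    rw [hΓ1]
    have := main (a t0 i / A t0) (fun t => a t i / A t) (fun t => a t i * B t)
      (by rw [hs]; field_simp; try ring)
      (fun t ht => by rw [hs]; field_simp [hAt t ht]; try ring)
      ?_
    · exact this.trans (hw1 i)
    · intro t ht
      show a t i * B t = 0
      rcases mul_eq_zero.mp ht with h | h
      · rw [hazero t h i, zero_mul]
      · rw [h, mul_zero]
  · -- Γ2 nonneg
    intro t j
    rw [hΓ2]
    refine mul_nonneg (le_of_lt (hσpos t)) ?_
    split_ifs
    · exact div_nonneg (hb t0 j) (hBnn t0)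
    · exact div_nonneg (hb t j) (hBnn t)
  · -- row sums of Γ2
    intro t
    rw [hΓ2]
    simp only
    rw [← Finset.mul_sum]
    by_cases hPt : P t
    · simp only [if_pos hPt, ← Finset.sum_div, ← hB, div_self hB0, mul_one]; show σ t * (B t0 / B t0) = σ t; rw [div_self hB0, mul_one]
    · simp only [if_neg hPt, ← Finset.sum_div, ← hB, div_self (hBt t hPt), mul_one]; show σ t * (B t / B t) = σ t; rw [div_self (hBt t hPt), mul_one]
  · -- column sums of Γ2
    intro j
    rw [hΓ2]
    have := main (b t0 j / B t0) (fun t => b t j / B t) (fun t => A t * b t j)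
      (by rw [hs]; field_simp; try ring)
      (fun t ht => by rw [hs]; field_simp [hBt t ht]; try ring)
      ?_
    · exact this.trans (hw2 j)
    · intro t ht
      show A t * b t j = 0
      rcases mul_eq_zero.mp ht with h | h
      · rw [h, zero_mul]
      · rw [hbzero t h j, mul_zero]
  · -- factorization
    ext i j
    rw [Matrix.mul_apply]
    simp only [Matrix.mul_diagonal, Matrix.transpose_apply]
    have hterm : ∀ t, Γ1 t i * (σ t)⁻¹ * Γ2 t j
        = σ t * (if P t then (a t0 i / A t0) * (b t0 j / B t0)
            else (a t i / A t) * (b t j / B t)) := by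
      intro t
      show σ t * (if P t then a t0 i / A t0 else a t i / A t) * (σ t)⁻¹ *
          (σ t * (if P t then b t0 j / B t0 else b t j / B t)) = _
      have key : ∀ x y : ℝ, σ t * x * (σ t)⁻¹ * (σ t * y) = σ t * (x * y) := by
        intro x y
        rw [mul_right_comm (σ t) x (σ t)⁻¹, mul_inv_cancel₀ (hσne t), one_mul]
        ring
      rw [key]
      split_ifs with h <;> rfl
    rw [Finset.sum_congr rfl (fun t _ => hterm t)]
    rw [main ((a t0 i / A t0) * (b t0 j / B t0))
      (fun t => (a t i / A t) * (b t j / B t)) (fun t => a t i * b t j)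
      (by rw [hs]; field_simp; try ring)
      (fun t ht => by rw [hs]; field_simp [hAt t ht, hBt t ht]; try ring)
      ?_]
    · exact hfac i j
    · intro t ht
      show a t i * b t j = 0
      rcases mul_eq_zero.mp ht with h | h
      · rw [hazero t h i, zero_mul]
      · rw [hbzero t h j, mul_zero]
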